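/- Let n be odd, let q = 2^n, and let a be a nonzero element of F_q. If x, y ∈ F_q satisfy x + y = a⁻¹ and Tr(a³x³ + a³y³) = 0, then we get a contradiction; equivalently, there are no x, y ∈ F_q with x + y = a⁻¹ and Tr(a³x³) = Tr(a³y³). -/
import Mathlib

theorem stmt_0 {n : ℕ} (hn : Odd n) (F : Type*) [Field F] [Fintype F]
    [Algebra (ZMod 2) F] (hcard : Fintype.card F = 2 ^ n)
    (a : F) (ha : a ≠ 0) :
    ¬ ∃ x y : F, x + y = a⁻¹ ∧
      Algebra.trace (ZMod 2) F (a ^ 3 * x ^ 3 + a ^ 3 * y ^ 3) = 0 := by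
  haveI : CharP F 2 := charP_of_injective_algebraMap (algebraMap (ZMod 2) F).injective 2
  rintro ⟨x, y, hxy, htr⟩
  have h2 : (2 : F) = 0 := by exact_mod_cast CharP.cast_eq_zero F 2
  have hy : y = a⁻¹ + x := by linear_combination hxy - x * h2
  have hay : a * y = 1 + a * x := by rw [hy, mul_add, mul_inv_cancel₀ ha]
  have key : a ^ 3 * x ^ 3 + a ^ 3 * y ^ 3 = 1 + a * x + (a * x) ^ 2 := by
    linear_combination ((a*y)^2 + (a*y)*(1+a*x) + (1+a*x)^2) * hay +
      ((a*x)^3 + a*x + (a*x)^2) * h2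
  -- Frobenius as an algebra equivalence over ZMod 2
  let e : F ≃ₐ[ZMod 2] F := AlgEquiv.ofRingEquiv (f := frobeniusEquiv F 2)
    (fun c => by
      have hc : ∀ c : ZMod 2, c ^ 2 = c := by decide
      simp [frobeniusEquiv_def, frobenius_def, ← map_pow, hc])
  have trsq : ∀ t : F, Algebra.trace (ZMod 2) F (t ^ 2) = Algebra.trace (ZMod 2) F t :=
    fun t => by
      have h := Algebra.trace_eq_of_algEquiv e t
      have he : e t = t ^ 2 := rfl
      rw [he] at h
      exact h
  have tr1 : Algebra.trace (ZMod 2) F 1 = 1 := by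
    have h1 : (1 : F) = algebraMap (ZMod 2) F 1 := by simp
    have hfin : Module.finrank (ZMod 2) F = n := by
      have := Module.card_eq_pow_finrank (K := ZMod 2) (V := F)
      rw [ZMod.card, hcard] at this
      exact (Nat.pow_right_injective le_rfl this.symm)
    rw [h1, Algebra.trace_algebraMap, hfin, nsmul_eq_mul, mul_one]
    obtain ⟨k, hk⟩ := hn
    subst hk
    push_cast
    simp [ZMod.natCast_self]
    exact Or.inl rfl
  rw [key, map_add, map_add, trsq, tr1] at htr
  have h2' : (2 : ZMod 2) = 0 := rfl
  rw [add_assoc, ← two_mul, h2', zero_mul, add_zero] at htr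
  exact one_ne_zero htr
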